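/- arXiv:0710.3491 — 3 statements merged into one kernel-verified Lean document; each statement's English description precedes it below -/
import Mathlib

section
/- The function f₀(x) = (1 − cos x)/(π x²) is a probability density on ℝ, i.e., it is nonnegative and integrates to 1. -/
open MeasureTheory Real Set Filter

/-- Integrability of `exp (-(t*x)) * (1 - cos x)` on `(0, ∞)` for `t > 0`. -/
lemma aux_L1 {t : ℝ} (ht : 0 < t) :
    IntegrableOn (fun x => Real.exp (-(t * x)) * (1 - Real.cos x)) (Ioi (0 : ℝ)) := by
  have hmaj : IntegrableOn (fun x => 2 * Real.exp (-t * x)) (Ioi (0 : ℝ)) :=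
    (exp_neg_integrableOn_Ioi 0 ht).const_mul 2
  refine hmaj.mono' ?_ ?_
  · exact (Continuous.mul (by continuity) (by continuity)).aestronglyMeasurable
  · filter_upwards [ae_restrict_mem measurableSet_Ioi] with x _
    have h1 : (0:ℝ) ≤ Real.exp (-(t * x)) := (Real.exp_pos _).le
    have h2 : |1 - Real.cos x| ≤ 2 := by
      have := Real.neg_one_le_cos x
      have := Real.cos_le_one x
      rw [abs_le]; constructor <;> linarith
    have : ‖Real.exp (-(t * x)) * (1 - Real.cos x)‖
        = Real.exp (-(t * x)) * |1 - Real.cos x| := by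
      rw [norm_mul, Real.norm_eq_abs, Real.norm_eq_abs, abs_of_nonneg h1]
    rw [this, neg_mul]
    nlinarith [Real.exp_pos (-(t*x))]

/-- Value of `∫ x in Ioi 0, exp (-(t*x)) * (1 - cos x)` for `t > 0`. -/
lemma aux_L2 {t : ℝ} (ht : 0 < t) :
    ∫ x in Ioi (0:ℝ), Real.exp (-(t * x)) * (1 - Real.cos x)
      = 1 / t - t / (1 + t ^ 2) := by
  have ht' : t ≠ 0 := ht.ne'
  have hden : (1 + t ^ 2) ≠ 0 := by positivity
  set H : ℝ → ℝ := fun x =>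
    -Real.exp (-(t * x)) / t - Real.exp (-(t * x)) * (Real.sin x - t * Real.cos x) / (1 + t ^ 2)
    with hH
  have hderiv : ∀ x ∈ Ici (0:ℝ), HasDerivAt H (Real.exp (-(t * x)) * (1 - Real.cos x)) x := by
    intro x _
    have he : HasDerivAt (fun x => Real.exp (-(t * x))) (-t * Real.exp (-(t * x))) x := by
      have : HasDerivAt (fun x : ℝ => -(t * x)) (-t) x := by
        exact (((hasDerivAt_id x).const_mul t).neg).congr_deriv (by ring)
      exact ((Real.hasDerivAt_exp (-(t*x))).comp x this).congr_deriv
        (show _ = -t * Real.exp (-(t * x)) by ring)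
    have hs : HasDerivAt (fun x => Real.sin x - t * Real.cos x)
        (Real.cos x + t * Real.sin x) x := by
      exact
        ((Real.hasDerivAt_sin x).sub ((Real.hasDerivAt_cos x).const_mul t)).congr_deriv (by ring)
    have h1 : HasDerivAt (fun x => -Real.exp (-(t * x)) / t)
        (Real.exp (-(t * x))) x := by
      have := (he.neg).div_const t
      simpa [neg_mul, neg_neg, mul_comm, mul_div_assoc, mul_div_cancel_left₀ _ ht'] using this
    have h2 : HasDerivAt
        (fun x => Real.exp (-(t * x)) * (Real.sin x - t * Real.cos x) / (1 + t ^ 2))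
        (Real.exp (-(t * x)) * Real.cos x) x := by
      have := ((he.mul hs).div_const (1 + t ^ 2))
      exact this.congr_deriv (by rw [div_eq_iff hden]; ring)
    have h3 := h1.sub h2
    have h4 : Real.exp (-(t * x)) * (1 - Real.cos x)
        = Real.exp (-(t * x)) - Real.exp (-(t * x)) * Real.cos x := by ring
    rw [h4]
    exact h3
  have htend : Tendsto H atTop (nhds 0) := by
    have he : Tendsto (fun x => Real.exp (-(t * x))) atTop (nhds 0) := by
      have hmul : Tendsto (fun x : ℝ => t * x) atTop atTop :=
        Tendsto.const_mul_atTop ht tendsto_id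
      have he2 := Real.tendsto_exp_neg_atTop_nhds_zero.comp hmul
      simpa [Function.comp_def] using he2
    have h1 : Tendsto (fun x => -Real.exp (-(t * x)) / t) atTop (nhds 0) := by
      simpa using (he.neg).div_const t
    have h2 : Tendsto
        (fun x => Real.exp (-(t * x)) * (Real.sin x - t * Real.cos x) / (1 + t ^ 2))
        atTop (nhds 0) := by
      have hb : Tendsto (fun x => Real.exp (-(t * x)) * (1 + t) / (1 + t ^ 2))
          atTop (nhds 0) := by
        simpa using (he.mul_const (1 + t)).div_const (1 + t ^ 2)
      apply squeeze_zero_norm _ hb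
      intro x
      have hbnd : |Real.sin x - t * Real.cos x| ≤ 1 + t := by
        calc |Real.sin x - t * Real.cos x| ≤ |Real.sin x| + |t * Real.cos x| := abs_sub _ _
        _ ≤ 1 + t := by
            have h3 : |t * Real.cos x| = t * |Real.cos x| := by
              rw [abs_mul, abs_of_pos ht]
            have := Real.abs_sin_le_one x
            have := Real.abs_cos_le_one x
            nlinarith
      have hpos : (0:ℝ) < 1 + t ^ 2 := by positivity
      rw [Real.norm_eq_abs, abs_div, abs_of_pos hpos, abs_mul,
        abs_of_nonneg (Real.exp_pos _).le]
      gcongr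
    simpa using h1.sub h2
  have := integral_Ioi_of_hasDerivAt_of_tendsto' hderiv (aux_L1 ht) htend
  rw [this, hH]
  simp only [Real.exp_zero, mul_zero, neg_zero, Real.sin_zero, Real.cos_zero, mul_one,
    zero_sub, one_mul]
  ring

/-- Integrability of `t * exp (-(x*t))` on `(0, ∞)` for `x > 0`. -/
lemma aux_L3 {x : ℝ} (hx : 0 < x) :
    IntegrableOn (fun t => t * Real.exp (-(x * t))) (Ioi (0 : ℝ)) := by
  have h := integrableOn_rpow_mul_exp_neg_mul_rpow (s := 1) (p := 1) (b := x)
    (by norm_num) one_pos hx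
  apply h.congr_fun ?_ measurableSet_Ioi
  intro t ht
  simp [Real.rpow_one]

/-- Value of `∫ t in Ioi 0, t * exp (-(x*t))` for `x > 0`. -/
lemma aux_L4 {x : ℝ} (hx : 0 < x) :
    ∫ t in Ioi (0:ℝ), t * Real.exp (-(x * t)) = 1 / x ^ 2 := by
  have h := Real.integral_rpow_mul_exp_neg_mul_Ioi (a := 2) (r := x) (by norm_num) hx
  have h2 : Real.Gamma 2 = 1 := by
    rw [show (2:ℝ) = (1:ℕ) + 1 by norm_num, Real.Gamma_nat_eq_factorial]
    simp
  rw [h2, mul_one] at h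
  have : ∫ t in Ioi (0:ℝ), t * Real.exp (-(x * t))
      = ∫ t in Ioi (0:ℝ), t ^ ((2:ℝ) - 1) * Real.exp (-(x * t)) := by
    refine setIntegral_congr_fun measurableSet_Ioi fun t ht => ?_
    rw [mem_Ioi] at ht
    norm_num
  rw [this, h, show (2:ℝ) = ((2:ℕ):ℝ) by norm_num, Real.rpow_natCast]
  rw [div_pow, one_pow]

lemma aux_key :
    ∫⁻ x in Ioi (0:ℝ), ENNReal.ofReal ((1 - Real.cos x) / x ^ 2)
      = ENNReal.ofReal (π / 2) := by
  have hmeas : AEMeasurable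
      (Function.uncurry fun t x : ℝ =>
        ENNReal.ofReal (t * Real.exp (-(t * x)) * (1 - Real.cos x)))
      ((volume.restrict (Ioi (0:ℝ))).prod (volume.restrict (Ioi (0:ℝ)))) := by
    apply Measurable.aemeasurable
    apply Measurable.ennreal_ofReal
    fun_prop
  have swap := lintegral_lintegral_swap hmeas
  -- left side: integrate over x first
  have hL : ∫⁻ t in Ioi (0:ℝ), ∫⁻ x in Ioi (0:ℝ),
      ENNReal.ofReal (t * Real.exp (-(t * x)) * (1 - Real.cos x))
      = ENNReal.ofReal (π / 2) := by
    have hinner : ∀ t ∈ Ioi (0:ℝ),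
        (∫⁻ x in Ioi (0:ℝ), ENNReal.ofReal (t * Real.exp (-(t * x)) * (1 - Real.cos x)))
          = ENNReal.ofReal ((1 + t ^ 2)⁻¹) := by
      intro t ht
      rw [mem_Ioi] at ht
      have hint : Integrable (fun x => t * (Real.exp (-(t * x)) * (1 - Real.cos x)))
          (volume.restrict (Ioi (0:ℝ))) := (aux_L1 ht).const_mul t
      have hnn : 0 ≤ᵐ[volume.restrict (Ioi (0:ℝ))]
          fun x => t * (Real.exp (-(t * x)) * (1 - Real.cos x)) := by
        filter_upwards with x
        have h1 : (0:ℝ) ≤ 1 - Real.cos x := by linarith [Real.cos_le_one x]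
        exact mul_nonneg ht.le (mul_nonneg (Real.exp_pos _).le h1)
      have := (ofReal_integral_eq_lintegral_ofReal hint hnn).symm
      simp_rw [mul_assoc]
      rw [this, integral_const_mul, aux_L2 ht]
      have ht' : t ≠ 0 := ht.ne'
      have hd : (1 + t ^ 2) ≠ 0 := by positivity
      rw [show t * (1 / t - t / (1 + t ^ 2)) = (1 + t ^ 2)⁻¹ by
        rw [mul_sub, mul_one_div, div_self ht', mul_div_assoc', inv_eq_one_div,
          sub_eq_iff_eq_add, ← add_div, eq_comm, div_eq_one_iff_eq hd]
        ring]
    rw [setLIntegral_congr_fun measurableSet_Ioi hinner]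
    have hnn2 : 0 ≤ᵐ[volume.restrict (Ioi (0:ℝ))] fun t : ℝ => (1 + t ^ 2)⁻¹ := by
      filter_upwards with t; positivity
    rw [← ofReal_integral_eq_lintegral_ofReal integrable_inv_one_add_sq.integrableOn hnn2,
      integral_Ioi_inv_one_add_sq, Real.arctan_zero, sub_zero]
  -- right side: integrate over t first
  have hR : ∫⁻ x in Ioi (0:ℝ), ∫⁻ t in Ioi (0:ℝ),
      ENNReal.ofReal (t * Real.exp (-(t * x)) * (1 - Real.cos x))
      = ∫⁻ x in Ioi (0:ℝ), ENNReal.ofReal ((1 - Real.cos x) / x ^ 2) := by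
    refine setLIntegral_congr_fun measurableSet_Ioi ?_
    intro x hx
    rw [mem_Ioi] at hx
    have hint : Integrable (fun t => (1 - Real.cos x) * (t * Real.exp (-(x * t))))
        (volume.restrict (Ioi (0:ℝ))) := (aux_L3 hx).const_mul _
    have hnn : 0 ≤ᵐ[volume.restrict (Ioi (0:ℝ))]
        fun t => (1 - Real.cos x) * (t * Real.exp (-(x * t))) := by
      filter_upwards [ae_restrict_mem measurableSet_Ioi] with t ht
      rw [mem_Ioi] at ht
      have h1 : (0:ℝ) ≤ 1 - Real.cos x := by linarith [Real.cos_le_one x]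
      exact mul_nonneg h1 (mul_nonneg ht.le (Real.exp_pos _).le)
    have heq : (fun t : ℝ => ENNReal.ofReal (t * Real.exp (-(t * x)) * (1 - Real.cos x)))
        = fun t => ENNReal.ofReal ((1 - Real.cos x) * (t * Real.exp (-(x * t)))) := by
      funext t; rw [mul_comm t x]; ring_nf
    beta_reduce
    rw [heq, ← ofReal_integral_eq_lintegral_ofReal hint hnn,
      integral_const_mul, aux_L4 hx,
      show (1 - Real.cos x) * (1 / x ^ 2) = (1 - Real.cos x) / x ^ 2 by ring]
  rw [← hR, ← swap, hL]

/-- The half-line integral. -/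
lemma aux_half :
    ∫ x in Ioi (0:ℝ), (1 - Real.cos x) / x ^ 2 = π / 2 := by
  have hmeas : Measurable fun x : ℝ => (1 - Real.cos x) / x ^ 2 := by fun_prop
  have hnn : 0 ≤ᵐ[volume.restrict (Ioi (0:ℝ))] fun x : ℝ => (1 - Real.cos x) / x ^ 2 := by
    filter_upwards with x
    have h1 : (0:ℝ) ≤ 1 - Real.cos x := by linarith [Real.cos_le_one x]
    exact div_nonneg h1 (sq_nonneg x)
  rw [integral_eq_lintegral_of_nonneg_ae hnn hmeas.aestronglyMeasurable, aux_key,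
    ENNReal.toReal_ofReal (by positivity)]

/-- `f₀(x) = (1 - cos x)/(π x²)` (extended continuously at 0 by `1/(2π)`)
is a probability density: it is nonnegative and integrates to 1. -/
theorem stmt1 (f₀ : ℝ → ℝ)
    (hf₀ : ∀ x : ℝ, f₀ x = if x = 0 then 1 / (2 * π) else (1 - Real.cos x) / (π * x ^ 2)) :
    (∀ x, 0 ≤ f₀ x) ∧ ∫ x : ℝ, f₀ x = 1 := by
  constructor
  · intro x
    rw [hf₀ x]
    split_ifs with h
    · positivity
    · have h1 : (0:ℝ) ≤ 1 - Real.cos x := by linarith [Real.cos_le_one x]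
      have h2 : (0:ℝ) < π * x ^ 2 := by
        have := Real.pi_pos
        have : x ^ 2 > 0 := by positivity
        positivity
      positivity
  · have hae : f₀ =ᵐ[volume] fun x => π⁻¹ * ((1 - Real.cos x) / x ^ 2) := by
      have h0 : (volume : Measure ℝ) {0} = 0 := Real.volume_singleton
      have hne : ∀ᵐ x : ℝ, x ≠ 0 := by
        rw [ae_iff]
        simpa using h0
      filter_upwards [hne] with x hx
      rw [hf₀ x, if_neg hx, div_eq_mul_inv, mul_inv, div_eq_mul_inv]
      ring
    have habs : ∫ x : ℝ, (1 - Real.cos x) / x ^ 2 = π := by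
      have h1 : (fun x : ℝ => (1 - Real.cos x) / x ^ 2)
          = fun x : ℝ => (1 - Real.cos |x|) / |x| ^ 2 := by
        funext x
        rw [Real.cos_abs, sq_abs]
      rw [h1, integral_comp_abs (f := fun x => (1 - Real.cos x) / x ^ 2), aux_half]
      ring
    rw [integral_congr_ae hae, integral_const_mul, habs,
      inv_mul_cancel₀ Real.pi_ne_zero]
end

section
/- Let ν > 0, ζ > 0, r > max(0, 1/ν − 1), and suppose |f_δ^ft(t)|² ≤ C₂(1+t²)^{−ν}. Then with h = n^{−ζ}, the variance-type term V_{2,n} = (2πn)^{−1} ∫_{{|f_δ^ft| ≥ h}} |f_δ^ft(t)|^{−2} dt satisfies V_{2,n} = O(n^{−1+ζ(2ν+1)/ν}), provided also |f_δ^ft(t)|² ≥ C₁(1+t²)^{−ν} with C₁ > 0. -/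
open MeasureTheory Real

/-- Ordinary-smooth variance bound: with `h = n^{−ζ}`, the term
`V_{2,n} = (2πn)⁻¹ ∫_{{|f_δ^ft| ≥ h}} |f_δ^ft(t)|⁻² dt` is
`O(n^{−1+ζ(2ν+1)/ν})`. -/
theorem stmt12 (fδ : ℝ → ℂ) (C₁ C₂ ν ζ r : ℝ) (hC₁ : 0 < C₁) (hC : C₁ < C₂)
    (hν : 0 < ν) (hζ : 0 < ζ) (hr : max 0 (1 / ν - 1) < r)
    (hub : ∀ t : ℝ, ‖fδ t‖ ^ 2 ≤ C₂ * (1 + t ^ 2) ^ (-ν))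
    (hlb : ∀ t : ℝ, C₁ * (1 + t ^ 2) ^ (-ν) ≤ ‖fδ t‖ ^ 2) :
    ∃ K : ℝ, 0 < K ∧ ∃ N : ℕ, ∀ n : ℕ, N ≤ n →
      (2 * π * n)⁻¹ *
          (∫ t in {t : ℝ | (n : ℝ) ^ (-ζ) ≤ ‖fδ t‖}, (‖fδ t‖)⁻¹ ^ 2)
        ≤ K * (n : ℝ) ^ (-1 + ζ * (2 * ν + 1) / ν) := by
  have hC₂ : 0 < C₂ := hC₁.trans hC
  have hπ : 0 < π := Real.pi_pos
  refine ⟨2 * C₂ ^ (1 / (2 * ν)) / π, by positivity, 1, fun n hn => ?_⟩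
  have npos : (0 : ℝ) < n := by exact_mod_cast hn
  set S : Set ℝ := {t : ℝ | (n : ℝ) ^ (-ζ) ≤ ‖fδ t‖} with hS
  set T : ℝ := C₂ ^ (1 / (2 * ν)) * (n : ℝ) ^ (ζ / ν) with hT
  have Tpos : 0 < T := by positivity
  -- S ⊆ Icc (-T) T
  have hsub : S ⊆ Set.Icc (-T) T := by
    intro t ht
    have ht' : (n : ℝ) ^ (-ζ) ≤ ‖fδ t‖ := ht
    have hbase : (0 : ℝ) < 1 + t ^ 2 := by positivity
    have hp1 : (0 : ℝ) < (1 + t ^ 2) ^ ν := Real.rpow_pos_of_pos hbase ν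
    have hp2 : (0 : ℝ) < (n : ℝ) ^ (2 * ζ) := Real.rpow_pos_of_pos npos _
    have h1 : (n : ℝ) ^ (-(2 * ζ)) ≤ C₂ * (1 + t ^ 2) ^ (-ν) := by
      have hsq : ((n : ℝ) ^ (-ζ)) ^ 2 ≤ ‖fδ t‖ ^ 2 :=
        pow_le_pow_left₀ (by positivity) ht' 2
      have heq : ((n : ℝ) ^ (-ζ)) ^ 2 = (n : ℝ) ^ (-(2 * ζ)) := by
        rw [← Real.rpow_natCast ((n : ℝ) ^ (-ζ)) 2, ← Real.rpow_mul npos.le]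
        norm_num
        ring_nf
      rw [heq] at hsq
      exact hsq.trans (hub t)
    have h2 : (1 + t ^ 2) ^ ν ≤ C₂ * (n : ℝ) ^ (2 * ζ) := by
      have h1' := mul_le_mul_of_nonneg_right h1 hp2.le
      rw [← Real.rpow_add npos] at h1'
      norm_num at h1'
      have h2' := mul_le_mul_of_nonneg_right h1' hp1.le
      have hcancel : (1 + t ^ 2) ^ (-ν) * (1 + t ^ 2) ^ ν = 1 := by
        rw [← Real.rpow_add hbase]; norm_num
      calc (1 + t ^ 2) ^ ν = 1 * (1 + t ^ 2) ^ ν := (one_mul _).symm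
        _ ≤ C₂ * (1 + t ^ 2) ^ (-ν) * (n : ℝ) ^ (2 * ζ) * (1 + t ^ 2) ^ ν := h2'
        _ = C₂ * (n : ℝ) ^ (2 * ζ) * ((1 + t ^ 2) ^ (-ν) * (1 + t ^ 2) ^ ν) := by ring
        _ = C₂ * (n : ℝ) ^ (2 * ζ) := by rw [hcancel, mul_one]
    have h3 : 1 + t ^ 2 ≤ (C₂ * (n : ℝ) ^ (2 * ζ)) ^ (1 / ν) := by
      have := Real.rpow_le_rpow hp1.le h2 (by positivity : (0:ℝ) ≤ 1 / ν)
      rwa [← Real.rpow_mul hbase.le, mul_one_div, div_self hν.ne', Real.rpow_one] at this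
    have hT2 : T ^ 2 = (C₂ * (n : ℝ) ^ (2 * ζ)) ^ (1 / ν) := by
      rw [Real.mul_rpow hC₂.le hp2.le, ← Real.rpow_mul npos.le, hT, mul_pow,
        ← Real.rpow_natCast (C₂ ^ (1 / (2 * ν))) 2, ← Real.rpow_mul hC₂.le,
        ← Real.rpow_natCast ((n : ℝ) ^ (ζ / ν)) 2, ← Real.rpow_mul npos.le]
      push_cast
      congr 1
      · congr 1
        field_simp
      · congr 1
        ring
    have h4 : t ^ 2 ≤ T ^ 2 := by nlinarith [h3, hT2]
    exact abs_le_of_sq_le_sq' h4 Tpos.le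
  -- measure of S is finite and bounded by 2T
  have hμS : volume S ≤ ENNReal.ofReal (2 * T) := by
    calc volume S ≤ volume (Set.Icc (-T) T) := measure_mono hsub
      _ = ENNReal.ofReal (T - -T) := by rw [Real.volume_Icc]
      _ = ENNReal.ofReal (2 * T) := by ring_nf
  have hμS_lt : volume S < ⊤ := lt_of_le_of_lt hμS ENNReal.ofReal_lt_top
  -- pointwise bound on S
  have hbound : ∀ t ∈ S, ‖(‖fδ t‖)⁻¹ ^ 2‖ ≤ (n : ℝ) ^ (2 * ζ) := by
    intro t ht
    have ht' : (n : ℝ) ^ (-ζ) ≤ ‖fδ t‖ := ht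
    have hpos : (0 : ℝ) < (n : ℝ) ^ (-ζ) := Real.rpow_pos_of_pos npos _
    have hinv : (‖fδ t‖)⁻¹ ≤ ((n : ℝ) ^ (-ζ))⁻¹ :=
      inv_anti₀ hpos ht'
    have heq : ((n : ℝ) ^ (-ζ))⁻¹ = (n : ℝ) ^ ζ := by
      rw [← Real.rpow_neg npos.le, neg_neg]
    rw [heq] at hinv
    have h2 : (‖fδ t‖)⁻¹ ^ 2 ≤ ((n : ℝ) ^ ζ) ^ 2 :=
      pow_le_pow_left₀ (by positivity) hinv 2
    have h3 : ((n : ℝ) ^ ζ) ^ 2 = (n : ℝ) ^ (2 * ζ) := by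
      rw [← Real.rpow_natCast ((n : ℝ) ^ ζ) 2, ← Real.rpow_mul npos.le]
      norm_num; ring_nf
    rw [Real.norm_eq_abs, abs_of_nonneg (by positivity)]
    rw [h3] at h2
    exact h2
  -- the integral bound
  have hint : (∫ t in S, (‖fδ t‖)⁻¹ ^ 2) ≤ (n : ℝ) ^ (2 * ζ) * (2 * T) := by
    by_cases hfm : AEStronglyMeasurable (fun t => (‖fδ t‖)⁻¹ ^ 2) (volume.restrict S)
    · have := norm_setIntegral_le_of_norm_le_const hμS_lt hbound
      have h2 : (volume S).toReal ≤ 2 * T := by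
        rw [← ENNReal.toReal_ofReal (by positivity : (0:ℝ) ≤ 2 * T)]
        exact ENNReal.toReal_mono ENNReal.ofReal_ne_top hμS
      calc (∫ t in S, (‖fδ t‖)⁻¹ ^ 2)
          ≤ ‖∫ t in S, (‖fδ t‖)⁻¹ ^ 2‖ := le_abs_self _
        _ ≤ (n : ℝ) ^ (2 * ζ) * (volume S).toReal := this
        _ ≤ (n : ℝ) ^ (2 * ζ) * (2 * T) := by
            exact mul_le_mul_of_nonneg_left h2 (by positivity)
    · rw [integral_undef (fun h => hfm h.aestronglyMeasurable)]
      positivity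
  -- put everything together
  have hfinal : (2 * π * n)⁻¹ * ((n : ℝ) ^ (2 * ζ) * (2 * T)) ≤
      2 * C₂ ^ (1 / (2 * ν)) / π * (n : ℝ) ^ (-1 + ζ * (2 * ν + 1) / ν) := by
    rw [hT]
    rw [show (-1 + ζ * (2 * ν + 1) / ν) = (-1) + (2 * ζ + ζ / ν) by field_simp]
    rw [Real.rpow_add npos, Real.rpow_add npos, Real.rpow_neg_one]
    have hπ' : π ≠ 0 := hπ.ne'
    have hn0 : (n : ℝ) ≠ 0 := npos.ne'
    have key : (2 * π * (n : ℝ))⁻¹ *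
          ((n : ℝ) ^ (2 * ζ) * (2 * (C₂ ^ (1 / (2 * ν)) * (n : ℝ) ^ (ζ / ν)))) =
        C₂ ^ (1 / (2 * ν)) / π * (((n : ℝ))⁻¹ * ((n : ℝ) ^ (2 * ζ) * (n : ℝ) ^ (ζ / ν))) := by
      field_simp
    have key2 : 2 * C₂ ^ (1 / (2 * ν)) / π *
          (((n : ℝ))⁻¹ * ((n : ℝ) ^ (2 * ζ) * (n : ℝ) ^ (ζ / ν))) =
        2 * (C₂ ^ (1 / (2 * ν)) / π * (((n : ℝ))⁻¹ * ((n : ℝ) ^ (2 * ζ) * (n : ℝ) ^ (ζ / ν)))) := by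
      ring
    rw [key, key2]
    have hpos2 : 0 < C₂ ^ (1 / (2 * ν)) / π *
        (((n : ℝ))⁻¹ * ((n : ℝ) ^ (2 * ζ) * (n : ℝ) ^ (ζ / ν))) := by positivity
    linarith
  calc (2 * π * n)⁻¹ * (∫ t in S, (‖fδ t‖)⁻¹ ^ 2)
      ≤ (2 * π * n)⁻¹ * ((n : ℝ) ^ (2 * ζ) * (2 * T)) := by
        exact mul_le_mul_of_nonneg_left hint (by positivity)
    _ ≤ 2 * C₂ ^ (1 / (2 * ν)) / π * (n : ℝ) ^ (-1 + ζ * (2 * ν + 1) / ν) := hfinal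
end

section
/- For μ ≥ 1, λ > 0, ν > 0 and the set G = {t > 0 : |sin(λt)|^μ |t|^{−ν} < ε}, every t ∈ G with t ∈ [(j−1/2)π/λ, (j+1/2)π/λ] for integer j ≥ 1 satisfies |t − jπ/λ| ≤ (π/(2λ)) ε^{1/μ} ((j+1/2)π/λ)^{ν/μ}. -/
open Real

/-- Geometric localization: for `μ ≥ 1`, `λ > 0`, `ν > 0`, `ε > 0`, any `t > 0`
with `|sin(λt)|^μ t^{−ν} < ε` lying in the `j`-th period
`[(j−1/2)π/λ, (j+1/2)π/λ]` (`j ≥ 1`) satisfies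
`|t − jπ/λ| ≤ (π/(2λ)) ε^{1/μ} ((j+1/2)π/λ)^{ν/μ}`. -/
theorem stmt13 (μ ν lam ε : ℝ) (hμ : 1 ≤ μ) (hν : 0 < ν) (hlam : 0 < lam)
    (hε : 0 < ε) :
    ∀ (j : ℕ), 1 ≤ j → ∀ t : ℝ, 0 < t →
      |Real.sin (lam * t)| ^ μ * t ^ (-ν) < ε →
      ((j : ℝ) - 1 / 2) * π / lam ≤ t → t ≤ ((j : ℝ) + 1 / 2) * π / lam →
      |t - (j : ℝ) * π / lam|
        ≤ (π / (2 * lam)) * ε ^ (1 / μ) * (((j : ℝ) + 1 / 2) * π / lam) ^ (ν / μ) := by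
  intro j hj t ht hG h1 h2
  have hμ0 : 0 < μ := lt_of_lt_of_le one_pos hμ
  have hπ := Real.pi_pos
  set y : ℝ := lam * t - (j : ℝ) * π with hy
  -- |y| ≤ π/2
  have hy1 : -(π / 2) ≤ y := by
    have := (div_le_iff₀ hlam).mp h1
    simp only [hy]; nlinarith
  have hy2 : y ≤ π / 2 := by
    have := (le_div_iff₀ hlam).mp h2
    simp only [hy]; nlinarith
  have hyabs : |y| ≤ π / 2 := abs_le.mpr ⟨hy1, hy2⟩
  -- |sin (lam * t)| = |sin y|
  have hsin : |Real.sin (lam * t)| = |Real.sin y| := by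
    have : lam * t = y + (j : ℝ) * π := by ring
    rw [this, Real.sin_add_nat_mul_pi, abs_mul, abs_pow, abs_neg, abs_one, one_pow, one_mul]
  -- lower bound: 2/π * |y| ≤ |sin y|
  have hlow : 2 / π * |y| ≤ |Real.sin y| := by
    have h := Real.mul_le_sin (abs_nonneg y) hyabs
    rcases abs_cases y with ⟨h1', _⟩ | ⟨h1', _⟩
    · rw [h1'] at h ⊢
      exact h.trans (le_abs_self _)
    · rw [h1'] at h ⊢
      rw [Real.sin_neg] at h
      exact h.trans (neg_le_abs _)
  -- upper bound on |sin(lam t)|^μ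
  set T : ℝ := ((j : ℝ) + 1 / 2) * π / lam with hT
  have hT0 : 0 < T := lt_of_lt_of_le ht h2
  have hkey : |Real.sin (lam * t)| ^ μ < ε * T ^ ν := by
    have htν : t ^ ν ≤ T ^ ν := Real.rpow_le_rpow ht.le h2 hν.le
    have ht0 : (0:ℝ) < t ^ ν := Real.rpow_pos_of_pos ht ν
    have h' : |Real.sin (lam * t)| ^ μ < ε * t ^ ν := by
      have := hG
      rw [Real.rpow_neg ht.le] at this
      calc |Real.sin (lam * t)| ^ μ = |Real.sin (lam * t)| ^ μ * (t ^ ν)⁻¹ * t ^ ν := by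
            field_simp
        _ < ε * t ^ ν := by
            exact mul_lt_mul_of_pos_right this ht0
    exact h'.trans_le (mul_le_mul_of_nonneg_left htν hε.le)
  -- take μ-th root
  have hsin0 : 0 ≤ |Real.sin (lam * t)| := abs_nonneg _
  have hroot : |Real.sin (lam * t)| ≤ ε ^ (1 / μ) * T ^ (ν / μ) := by
    have h := Real.rpow_le_rpow (Real.rpow_nonneg hsin0 μ) hkey.le (by positivity : (0:ℝ) ≤ 1 / μ)
    rw [← Real.rpow_mul hsin0, mul_one_div, div_self hμ0.ne', Real.rpow_one,
      Real.mul_rpow hε.le (Real.rpow_nonneg hT0.le ν), ← Real.rpow_mul hT0.le,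
      mul_one_div] at h
    exact h
  -- combine
  have habs : |t - (j : ℝ) * π / lam| = |y| / lam := by
    have : t - (j : ℝ) * π / lam = y / lam := by
      rw [hy]; field_simp
    rw [this, abs_div, abs_of_pos hlam]
  rw [habs]
  have h3 : |y| ≤ (π / 2) * |Real.sin (lam * t)| := by
    rw [hsin]
    have := mul_le_mul_of_nonneg_left hlow (le_of_lt (by positivity : (0:ℝ) < π / 2))
    calc |y| = (π / 2) * (2 / π * |y|) := by field_simp
      _ ≤ (π / 2) * |Real.sin y| := this
  calc |y| / lam ≤ (π / 2) * |Real.sin (lam * t)| / lam := by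
        exact div_le_div_of_nonneg_right h3 hlam.le |>.trans_eq rfl
    _ ≤ (π / 2) * (ε ^ (1 / μ) * T ^ (ν / μ)) / lam := by
        apply div_le_div_of_nonneg_right _ hlam.le
        exact mul_le_mul_of_nonneg_left hroot (by positivity)
    _ = (π / (2 * lam)) * ε ^ (1 / μ) * T ^ (ν / μ) := by ring
end
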